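/- For fixed x ∈ ℂ^N and ε > 0, the unique minimizer over weights w > 0 of the functional J_τ(x, w, ε) = (τ/2)[ Σ_j |x_j|^2 w_j + Σ_j ( ε^2 w_j + ((2−τ)/τ) w_j^{−τ/(2−τ)} ) ] is given componentwise by w_j = (|x_j|^2 + ε^2)^{−(2−τ)/2}. -/

import Mathlib

/-- The IRLS functional `J_τ(x, w, ε)`. -/
noncomputable def Jfun {N : ℕ} (τ : ℝ) (x : Fin N → ℂ) (w : Fin N → ℝ) (ε : ℝ) : ℝ :=
  (τ / 2) * ((∑ j, ‖x j‖ ^ 2 * w j) +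
    ∑ j, (ε ^ 2 * w j + ((2 - τ) / τ) * (w j) ^ (-(τ / (2 - τ)))))

lemma keyfun_aux (p : ℝ) (hp : 0 < p) {t : ℝ} (ht : 0 < t) (hne : t ≠ 1) :
    1 + p⁻¹ < t + p⁻¹ * t ^ (-p) := by
  set h : ℝ → ℝ := fun s => s + p⁻¹ * s ^ (-p) with hh
  have hderiv : ∀ s : ℝ, 0 < s → HasDerivAt h (1 - s ^ (-p - 1)) s := by
    intro s hs
    have h1 : HasDerivAt (fun s : ℝ => s ^ (-p)) (-p * s ^ (-p - 1)) s :=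
      Real.hasDerivAt_rpow_const (Or.inl hs.ne')
    have h2 := (hasDerivAt_id s).add (h1.const_mul p⁻¹)
    have hpp : p⁻¹ * p = 1 := inv_mul_cancel₀ hp.ne'
    have heq : 1 - s ^ (-p - 1) = 1 + p⁻¹ * (-p * s ^ (-p - 1)) := by
      linear_combination s ^ (-p - 1) * hpp
    rw [heq]
    exact h2
  have h1v : h 1 = 1 + p⁻¹ := by simp [hh, Real.one_rpow]
  rcases lt_or_gt_of_ne hne with hlt | hgt
  · have anti : StrictAntiOn h (Set.Icc t 1) := by
      apply strictAntiOn_of_deriv_neg (convex_Icc t 1)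
      · intro s hs
        exact ((hderiv s (lt_of_lt_of_le ht hs.1)).differentiableAt).continuousAt.continuousWithinAt
      · intro s hs
        rw [interior_Icc] at hs
        have hs0 : 0 < s := ht.trans hs.1
        rw [(hderiv s hs0).deriv]
        have h1s : 1 < s ^ (-p - 1) := by
          rw [Real.one_lt_rpow_iff_of_pos hs0]
          right; exact ⟨hs.2, by linarith⟩
        linarith
    have := anti (Set.left_mem_Icc.2 hlt.le) (Set.right_mem_Icc.2 hlt.le) hlt
    rwa [h1v] at this
  · have mono : StrictMonoOn h (Set.Icc 1 t) := by
      apply strictMonoOn_of_deriv_pos (convex_Icc 1 t)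
      · intro s hs
        exact ((hderiv s (lt_of_lt_of_le one_pos hs.1)).differentiableAt).continuousAt.continuousWithinAt
      · intro s hs
        rw [interior_Icc] at hs
        have hs0 : 0 < s := one_pos.trans hs.1
        rw [(hderiv s hs0).deriv]
        have h1s : s ^ (-p - 1) < 1 :=
          Real.rpow_lt_one_of_one_lt_of_neg hs.1 (by linarith)
        linarith
    have := mono (Set.left_mem_Icc.2 hgt.le) (Set.right_mem_Icc.2 hgt.le) hgt
    rwa [h1v] at this

lemma comp_ineq (τ : ℝ) (hτ0 : 0 < τ) (hτ1 : τ ≤ 1) {a : ℝ} (ha : 0 < a)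
    {w : ℝ} (hw : 0 < w) (hne : w ≠ a ^ (-((2 - τ) / 2))) :
    a * a ^ (-((2 - τ) / 2)) + (2 - τ) / τ * (a ^ (-((2 - τ) / 2))) ^ (-(τ / (2 - τ)))
      < a * w + (2 - τ) / τ * w ^ (-(τ / (2 - τ))) := by
  have h2τ : 0 < 2 - τ := by linarith
  set p : ℝ := τ / (2 - τ) with hpdef
  have hp : 0 < p := div_pos hτ0 h2τ
  have hcinv : (2 - τ) / τ = p⁻¹ := by rw [hpdef, inv_div]
  set e : ℝ := (2 - τ) / 2 with hedef
  have hae : 0 < a ^ e := Real.rpow_pos_of_pos ha e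
  have haτ : 0 < a ^ (τ / 2) := Real.rpow_pos_of_pos ha _
  set t : ℝ := w * a ^ e with htdef
  have ht : 0 < t := mul_pos hw hae
  have hwt : w = t * a ^ (-e) := by
    rw [htdef, Real.rpow_neg ha.le]
    field_simp
  have htne : t ≠ 1 := by
    intro h
    apply hne
    rw [hwt, h, one_mul]
  -- a * a^(-e) = a^(τ/2)
  have key1 : a * a ^ (-e) = a ^ (τ / 2) := by
    calc a * a ^ (-e) = a ^ (1 : ℝ) * a ^ (-e) := by rw [Real.rpow_one]
      _ = a ^ (1 + -e) := (Real.rpow_add ha _ _).symm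
      _ = a ^ (τ / 2) := by rw [hedef]; ring_nf
  -- (a^(-e))^(-p) = a^(τ/2)
  have key2 : (a ^ (-e)) ^ (-p) = a ^ (τ / 2) := by
    rw [← Real.rpow_mul ha.le]
    congr 1
    rw [hedef, hpdef]
    field_simp
  have key3 : a * w + p⁻¹ * w ^ (-p) = a ^ (τ / 2) * (t + p⁻¹ * t ^ (-p)) := by
    have hwp : w ^ (-p) = t ^ (-p) * (a ^ (-e)) ^ (-p) := by
      rw [hwt, Real.mul_rpow ht.le (Real.rpow_nonneg ha.le _)]
    rw [key2] at hwp
    have haw : a * w = a ^ (τ / 2) * t := by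
      rw [hwt, ← mul_assoc, mul_comm a t, mul_assoc, key1]
      ring
    rw [hwp, haw]
    ring
  rw [hcinv, key1, key2, key3]
  have lhs_eq : a ^ (τ / 2) + p⁻¹ * a ^ (τ / 2) = a ^ (τ / 2) * (1 + p⁻¹) := by ring
  rw [lhs_eq]
  exact mul_lt_mul_of_pos_left (keyfun_aux p hp ht htne) haτ

theorem stmt_5 (N : ℕ) (τ ε : ℝ) (hτ0 : 0 < τ) (hτ1 : τ ≤ 1) (hε : 0 < ε)
    (x : Fin N → ℂ) (wopt : Fin N → ℝ)
    (hwopt : ∀ j, wopt j = (‖x j‖ ^ 2 + ε ^ 2) ^ (-((2 - τ) / 2))) :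
    (∀ j, 0 < wopt j) ∧
    ∀ w : Fin N → ℝ, (∀ j, 0 < w j) → w ≠ wopt →
      Jfun τ x wopt ε < Jfun τ x w ε := by
  have ha : ∀ j, 0 < ‖x j‖ ^ 2 + ε ^ 2 := fun j => by positivity
  have hwpos : ∀ j, 0 < wopt j := fun j => by
    rw [hwopt j]; exact Real.rpow_pos_of_pos (ha j) _
  refine ⟨hwpos, fun w hw hne => ?_⟩
  have hJ : ∀ v : Fin N → ℝ, Jfun τ x v ε =
      (τ / 2) * ∑ j, ((‖x j‖ ^ 2 + ε ^ 2) * v j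
        + (2 - τ) / τ * (v j) ^ (-(τ / (2 - τ)))) := by
    intro v
    unfold Jfun
    rw [← Finset.sum_add_distrib]
    congr 1
    apply Finset.sum_congr rfl
    intro j _
    ring
  rw [hJ, hJ]
  apply mul_lt_mul_of_pos_left _ (by linarith : (0:ℝ) < τ / 2)
  obtain ⟨j₀, hj₀⟩ := Function.ne_iff.mp hne
  apply Finset.sum_lt_sum
  · intro j _
    by_cases h : w j = wopt j
    · rw [h]
    · have := comp_ineq τ hτ0 hτ1 (ha j) (hw j) (by rw [← hwopt j]; exact h)
      rw [← hwopt j] at this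
      exact this.le
  · refine ⟨j₀, Finset.mem_univ j₀, ?_⟩
    have := comp_ineq τ hτ0 hτ1 (ha j₀) (hw j₀) (by rw [← hwopt j₀]; exact hj₀)
    rwa [← hwopt j₀] at this
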